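/- Let g be a Lie algebra over a field F in which any two commuting elements are linearly dependent (i.e. whenever ⁅a,b⁆ = 0 for a, b ∈ g, the vectors a and b are linearly dependent; equivalently g has no non-trivial abelian subalgebras). Let λ, μ : g → g be linear maps and s ∈ g satisfying, for all a, b ∈ g: (1) ⁅λ(a),b⁆ − ⁅a,μ(b)⁆ = λ(⁅a,b⁆); (2) ⁅μ(a),b⁆ − ⁅μ(b),a⁆ = μ(⁅a,b⁆); (3) ⁅s,a⁆ + μ(a) = μ(μ(a)) + λ(μ(a)). Then there exists α ∈ F such that λ(a) + μ(a) = α·a for all a ∈ g; hence the homogeneous Leibniz affgebra a(g;λ,μ,s) equals a(g; α·id − μ, μ, s). -/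
import Mathlib


/-- Let `g` be a Lie algebra over a field `F` in which any two commuting elements are
linearly dependent (no non-trivial abelian subalgebras). If `(lam, mu, s)` satisfies
the homogeneous Leibniz affgebra conditions (1)–(3), then there exists `α ∈ F` with
`lam + mu = α·id`; hence `a(g;lam,mu,s) = a(g;α·id − mu, mu, s)`. -/
theorem homogeneous_leibniz_affgebra_no_abelian_subalgebras
    {F g : Type*} [Field F] [LieRing g] [LieAlgebra F g]
    (hdep : ∀ a b : g, ⁅a, b⁆ = 0 → ¬ LinearIndependent F ![a, b])
    (lam mu : g →ₗ[F] g) (s : g)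
    (h1 : ∀ a b : g, ⁅lam a, b⁆ - ⁅a, mu b⁆ = lam ⁅a, b⁆)
    (h2 : ∀ a b : g, ⁅mu a, b⁆ - ⁅mu b, a⁆ = mu ⁅a, b⁆)
    (h3 : ∀ a : g, ⁅s, a⁆ + mu a = mu (mu a) + lam (mu a)) :
    ∃ α : F, ∀ a : g, lam a + mu a = α • a := by
  set θ : g →ₗ[F] g := lam + mu with hθ
  have hθa : ∀ a : g, θ a = lam a + mu a := fun a => rfl
  -- Step 1: ⁅a, θ a⁆ = 0 for all a.
  have hbr : ∀ a : g, ⁅a, θ a⁆ = (0 : g) := by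
    intro a
    have e1 := h1 a a
    rw [lie_self, map_zero, sub_eq_zero] at e1
    have : ⁅a, θ a⁆ = ⁅a, lam a⁆ + ⁅a, mu a⁆ := by rw [hθa, lie_add]
    rw [this, ← e1, ← lie_skew, neg_add_cancel]
  -- Step 2: every nonzero a is an eigenvector of θ.
  have eig : ∀ a : g, a ≠ 0 → ∃ c : F, θ a = c • a := by
    intro a ha
    have h := hdep a (θ a) (hbr a)
    rw [LinearIndependent.pair_iff' ha] at h
    push_neg at h
    obtain ⟨c, hc⟩ := h
    exact ⟨c, hc.symm⟩
  -- Step 3: the eigenvalue is independent of the vector.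
  by_cases htriv : ∀ a : g, a = 0
  · exact ⟨0, fun a => by rw [htriv a]; simp⟩
  push_neg at htriv
  obtain ⟨a₀, ha₀⟩ := htriv
  obtain ⟨α, hα⟩ := eig a₀ ha₀
  refine ⟨α, fun a => ?_⟩
  rw [← hθa]
  by_cases ha : a = 0
  · simp [ha]
  obtain ⟨c, hc⟩ := eig a ha
  rw [hc]
  -- it suffices to show c = α
  by_cases hli : LinearIndependent F ![a₀, a]
  · have hsum : a₀ + a ≠ 0 := by
      intro h
      have := LinearIndependent.pair_iff.1 hli 1 1 (by simpa using h)
      exact one_ne_zero this.1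
    obtain ⟨d, hd⟩ := eig (a₀ + a) hsum
    rw [map_add, hα, hc, smul_add] at hd
    have hrel : (α - d) • a₀ + (c - d) • a = 0 := by
      calc (α - d) • a₀ + (c - d) • a
          = (α • a₀ + c • a) - (d • a₀ + d • a) := by
            rw [sub_smul, sub_smul]; abel
        _ = 0 := by rw [hd]; abel
    have := LinearIndependent.pair_iff.1 hli (α - d) (c - d) hrel
    have hc' : c = d := sub_eq_zero.mp this.2
    have hα' : α = d := sub_eq_zero.mp this.1
    rw [hc', ← hα']
  · -- a is a multiple of a₀
    rw [LinearIndependent.pair_iff' ha₀] at hli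
    push_neg at hli
    obtain ⟨t, ht⟩ := hli
    have ht0 : t ≠ 0 := by rintro rfl; simp at ht; exact ha ht.symm
    have : θ a = α • a := by
      rw [← ht, map_smul, hα, smul_smul, smul_smul, mul_comm]
    rw [← hc, this]
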